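/- Let U ⊆ V be a 3-dimensional subspace that is not Lagrangian (i.e. α does not vanish identically on U × U). Then U^⊥ is also 3-dimensional and not Lagrangian, U ∩ U^⊥ equals the radical {v ∈ U : α(v,u) = 0 for all u ∈ U} of α restricted to U, which is 1-dimensional, and for every Lagrangian subspace L of V one has L ∩ U ≠ 0 if and only if L ∩ U^⊥ ≠ 0. -/

import Mathlib

open Module

/-- A subspace `U` is *isotropic* for the bilinear form `α` if `α` vanishes identically
on `U × U`. -/
def IsIsotropic {V : Type*} [AddCommGroup V] [Module ℂ V]
    (α : V →ₗ[ℂ] V →ₗ[ℂ] ℂ) (U : Submodule ℂ V) : Prop :=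
  ∀ u ∈ U, ∀ v ∈ U, α u v = 0

/-- A subspace `U` is *Lagrangian* if it is isotropic of dimension `3`. -/
def IsLagrangian {V : Type*} [AddCommGroup V] [Module ℂ V]
    (α : V →ₗ[ℂ] V →ₗ[ℂ] ℂ) (U : Submodule ℂ V) : Prop :=
  IsIsotropic α U ∧ Module.finrank ℂ U = 3

/-- The symplectic orthogonal `W^⊥ = {v ∈ V : α(v,w) = 0 for all w ∈ W}` of a subspace `W`. -/
def symplOrth {V : Type*} [AddCommGroup V] [Module ℂ V]
    (α : V →ₗ[ℂ] V →ₗ[ℂ] ℂ) (W : Submodule ℂ V) : Submodule ℂ V where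
  carrier := {v | ∀ w ∈ W, α v w = 0}
  add_mem' := by
    intro a b ha hb w hw
    simp [ha w hw, hb w hw]
  zero_mem' := by
    intro w hw
    simp
  smul_mem' := by
    intro c a ha w hw
    simp [ha w hw]

section Aux

variable {V : Type*} [AddCommGroup V] [Module ℂ V]

lemma mem_symplOrth_aux (α : V →ₗ[ℂ] V →ₗ[ℂ] ℂ) {W : Submodule ℂ V} {v : V} :
    v ∈ symplOrth α W ↔ ∀ w ∈ W, α v w = 0 := Iff.rfl

lemma symplOrth_eq_orthogonal_aux (α : V →ₗ[ℂ] V →ₗ[ℂ] ℂ) (hrefl : α.IsRefl)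
    (W : Submodule ℂ V) : symplOrth α W = LinearMap.BilinForm.orthogonal α W := by
  ext v
  rw [mem_symplOrth_aux, LinearMap.BilinForm.mem_orthogonal_iff]
  exact ⟨fun h n hn => hrefl _ _ (h n hn), fun h n hn => hrefl _ _ (h n hn)⟩

end Aux

theorem involutive_pair_of_nonlagrangian_threespace
    (V : Type*) [AddCommGroup V] [Module ℂ V] [FiniteDimensional ℂ V]
    (hV : Module.finrank ℂ V = 6)
    (α : V →ₗ[ℂ] V →ₗ[ℂ] ℂ)
    (halt : ∀ v : V, α v v = 0)
    (hnd : ∀ v : V, (∀ w : V, α v w = 0) → v = 0)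
    (U : Submodule ℂ V) (hU : Module.finrank ℂ U = 3)
    (hUnl : ¬ IsIsotropic α U) :
    Module.finrank ℂ (symplOrth α U) = 3 ∧
    ¬ IsIsotropic α (symplOrth α U) ∧
    ((U ⊓ symplOrth α U : Submodule ℂ V) : Set V) =
      {v : V | v ∈ U ∧ ∀ u ∈ U, α v u = 0} ∧
    Module.finrank ℂ ↥(U ⊓ symplOrth α U) = 1 ∧
    (∀ L : Submodule ℂ V, IsLagrangian α L →
      (L ⊓ U ≠ ⊥ ↔ L ⊓ symplOrth α U ≠ ⊥)) := by
  have halt' : α.IsAlt := halt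
  have hrefl : α.IsRefl := halt'.isRefl
  have hnd' : LinearMap.BilinForm.Nondegenerate α :=
    ⟨hnd, fun y hy => hnd y (fun w => hrefl _ _ (hy w))⟩
  have skew : ∀ x y : V, α x y = -α y x := fun x y => by
    rw [halt'.neg]
  -- dimension of orthogonals
  have hdim : ∀ W : Submodule ℂ V, Module.finrank ℂ (symplOrth α W)
      = 6 - Module.finrank ℂ W := by
    intro W
    rw [symplOrth_eq_orthogonal_aux α hrefl,
      LinearMap.BilinForm.finrank_orthogonal hnd', hV]
  have hdo : ∀ W : Submodule ℂ V, symplOrth α (symplOrth α W) = W := by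
    intro W
    rw [symplOrth_eq_orthogonal_aux α hrefl, symplOrth_eq_orthogonal_aux α hrefl,
      LinearMap.BilinForm.orthogonal_orthogonal hnd' hrefl]
  have hUo3 : Module.finrank ℂ (symplOrth α U) = 3 := by rw [hdim, hU]
  -- a non-degenerate pair in U
  simp only [IsIsotropic, not_forall] at hUnl
  obtain ⟨u, hu, v, hv, huv⟩ := hUnl
  -- the span of the pair
  set S : Submodule ℂ V := Submodule.span ℂ {u, v} with hS
  have hSle : S ≤ U := by
    rw [hS, Submodule.span_le]
    intro x hx
    rcases Set.mem_insert_iff.mp hx with rfl | hx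
    · exact hu
    · rw [Set.mem_singleton_iff] at hx
      subst hx
      exact hv
  have hmemS : ∀ x ∈ S, ∃ a b : ℂ, a • u + b • v = x := by
    intro x hx
    exact Submodule.mem_span_pair.mp hx
  -- K is the radical
  set K : Submodule ℂ V := U ⊓ symplOrth α U with hK
  have hSK : S ⊓ K = ⊥ := by
    rw [eq_bot_iff]
    rintro x ⟨hxS, hxU, hxO⟩
    obtain ⟨a, b, rfl⟩ := hmemS x hxS
    have h1 : α (a • u + b • v) v = 0 := hxO v hv
    have h2 : α (a • u + b • v) u = 0 := hxO u hu
    simp only [map_add, map_smul, LinearMap.add_apply, LinearMap.smul_apply,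
      halt, smul_eq_mul, mul_zero, add_zero, zero_add] at h1 h2
    have ha : a = 0 := by
      rcases mul_eq_zero.mp h1 with h | h
      · exact h
      · exact absurd h huv
    have hb : b = 0 := by
      have : α v u = -α u v := skew v u
      rw [this] at h2
      rcases mul_eq_zero.mp h2 with h | h
      · exact h
      · exact absurd (neg_eq_zero.mp h) huv
    simp [ha, hb]
  have hune : u ≠ 0 := by
    rintro rfl; simp at huv
  have hvnotu : v ∉ Submodule.span ℂ {u} := by
    intro h
    obtain ⟨c, rfl⟩ := Submodule.mem_span_singleton.mp h
    simp [halt] at huv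
  have hSdim : Module.finrank ℂ S = 2 := by
    have : S = Submodule.span ℂ {u} ⊔ Submodule.span ℂ {v} := by
      rw [hS, ← Submodule.span_union, Set.singleton_union]
    rw [this]
    have hinf : Submodule.span ℂ {u} ⊓ Submodule.span ℂ {v} = ⊥ := by
      rw [eq_bot_iff]
      rintro x ⟨hx1, hx2⟩
      obtain ⟨c, rfl⟩ := Submodule.mem_span_singleton.mp hx1
      obtain ⟨d, hd⟩ := Submodule.mem_span_singleton.mp hx2
      rcases eq_or_ne c 0 with rfl | hc
      · simp
      · exfalso; apply hvnotu
        rw [Submodule.mem_span_singleton]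
        have hdne : d ≠ 0 := by
          rintro rfl
          rw [zero_smul] at hd
          exact hune ((smul_eq_zero.mp hd.symm).resolve_left hc)
        refine ⟨d⁻¹ * c, ?_⟩
        rw [mul_smul, ← hd, inv_smul_smul₀ hdne]
    have := Submodule.finrank_sup_add_finrank_inf_eq
      (Submodule.span ℂ {u}) (Submodule.span ℂ {v})
    rw [hinf, finrank_bot, finrank_span_singleton hune,
      finrank_span_singleton (fun h => by subst h; simp [halt] at huv)] at this
    omega
  -- find z in the radical
  have hker : ∀ w : V, 5 ≤ Module.finrank ℂ (LinearMap.ker (α.flip w)) := by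
    intro w
    have h1 := LinearMap.finrank_range_add_finrank_ker (α.flip w)
    have h2 : Module.finrank ℂ (LinearMap.range (α.flip w)) ≤ 1 := by
      have := Submodule.finrank_le (LinearMap.range (α.flip w))
      simpa using this
    rw [hV] at h1
    omega
  have hinfge : ∀ (A : Submodule ℂ V) (w : V), Module.finrank ℂ A - 1
      ≤ Module.finrank ℂ ↥(A ⊓ LinearMap.ker (α.flip w)) := by
    intro A w
    have h1 := Submodule.finrank_sup_add_finrank_inf_eq A (LinearMap.ker (α.flip w))
    have h2 : Module.finrank ℂ ↥(A ⊔ LinearMap.ker (α.flip w)) ≤ 6 := by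
      rw [← hV]; exact Submodule.finrank_le _
    have h3 := hker w
    omega
  set W' : Submodule ℂ V := U ⊓ LinearMap.ker (α.flip u) ⊓ LinearMap.ker (α.flip v)
    with hW'
  have hW'ge : 1 ≤ Module.finrank ℂ W' := by
    have h1 := hinfge U u
    have h2 := hinfge (U ⊓ LinearMap.ker (α.flip u)) v
    rw [hU] at h1
    rw [hW']
    omega
  have hW'ne : W' ≠ ⊥ := by
    intro h
    rw [h, finrank_bot] at hW'ge
    omega
  obtain ⟨z, hzW', hzne⟩ := Submodule.exists_mem_ne_zero_of_ne_bot hW'ne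
  obtain ⟨⟨hzU, hzu⟩, hzv⟩ := hzW'
  simp only [SetLike.mem_coe, LinearMap.mem_ker, LinearMap.flip_apply] at hzu hzv
  simp only [SetLike.mem_coe] at hzU
  -- z is not in S
  have hznotS : z ∉ S := by
    intro h
    obtain ⟨a, b, hab⟩ := hmemS z h
    have h1 : α z v = 0 := hzv
    have h2 : α z u = 0 := hzu
    rw [← hab] at h1 h2
    simp only [map_add, map_smul, LinearMap.add_apply, LinearMap.smul_apply,
      halt, smul_eq_mul, mul_zero, add_zero, zero_add] at h1 h2
    have ha : a = 0 := by
      rcases mul_eq_zero.mp h1 with h | h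
      · exact h
      · exact absurd h huv
    have hb : b = 0 := by
      rw [skew v u] at h2
      rcases mul_eq_zero.mp h2 with h | h
      · exact h
      · exact absurd (neg_eq_zero.mp h) huv
    apply hzne
    rw [← hab, ha, hb]
    simp
  -- U = S ⊔ span z
  have hSz : S ⊓ Submodule.span ℂ {z} = ⊥ := by
    rw [eq_bot_iff]
    rintro x ⟨hx1, hx2⟩
    obtain ⟨c, rfl⟩ := Submodule.mem_span_singleton.mp hx2
    rcases eq_or_ne c 0 with rfl | hc
    · simp
    · exfalso; apply hznotS
      have : z = c⁻¹ • (c • z) := by rw [inv_smul_smul₀ hc]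
      rw [this]
      exact Submodule.smul_mem _ _ hx1
  have hTU : S ⊔ Submodule.span ℂ {z} = U := by
    apply Submodule.eq_of_le_of_finrank_le
    · apply sup_le hSle
      rw [Submodule.span_le, Set.singleton_subset_iff]
      exact hzU
    · have h1 := Submodule.finrank_sup_add_finrank_inf_eq S (Submodule.span ℂ {z})
      rw [hSz, finrank_bot, hSdim, finrank_span_singleton hzne] at h1
      omega
  -- z is in the radical K
  have hzK : z ∈ K := by
    refine ⟨hzU, fun w hw => ?_⟩
    rw [← hTU] at hw
    obtain ⟨s, hs, t, ht, rfl⟩ := Submodule.mem_sup.mp hw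
    obtain ⟨a, b, rfl⟩ := hmemS s hs
    obtain ⟨c, rfl⟩ := Submodule.mem_span_singleton.mp ht
    simp [hzu, hzv, halt]
  -- dimension of K
  have hK1 : Module.finrank ℂ ↥(U ⊓ symplOrth α U) = 1 := by
    have hle : 1 ≤ Module.finrank ℂ K := by
      have : Submodule.span ℂ {z} ≤ K := by
        rw [Submodule.span_le, Set.singleton_subset_iff]; exact hzK
      have := Submodule.finrank_mono this
      rw [finrank_span_singleton hzne] at this
      exact this
    have hge : Module.finrank ℂ K ≤ 1 := by
      have h1 := Submodule.finrank_sup_add_finrank_inf_eq S K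
      have h2 : Module.finrank ℂ ↥(S ⊔ K) ≤ 3 := by
        rw [← hU]
        apply Submodule.finrank_mono
        exact sup_le hSle inf_le_left
      rw [hSK, finrank_bot, hSdim] at h1
      omega
    rw [← hK]
    omega
  -- U^⊥ not isotropic
  have hnotiso : ¬ IsIsotropic α (symplOrth α U) := by
    intro h
    have hle : symplOrth α U ≤ U := by
      nth_rewrite 2 [← hdo U]
      intro x hx w hw
      exact h x hx w hw
    have heq : symplOrth α U = U :=
      Submodule.eq_of_le_of_finrank_le hle (by rw [hU, hUo3])
    rw [heq] at h
    exact huv (h u hu v hv)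
  -- helper facts for the Lagrangian part
  have horth_top : symplOrth α ⊤ = ⊥ := by
    rw [eq_bot_iff]
    intro x hx
    have : x = 0 := hnd x (fun w => hx w trivial)
    simp [this]
  have horth_sup : ∀ A B : Submodule ℂ V,
      symplOrth α (A ⊔ B) = symplOrth α A ⊓ symplOrth α B := by
    intro A B
    ext x
    constructor
    · intro hx
      exact ⟨fun w hw => hx w (Submodule.mem_sup_left hw),
        fun w hw => hx w (Submodule.mem_sup_right hw)⟩
    · rintro ⟨h1, h2⟩ w hw
      obtain ⟨a, ha, b, hb, rfl⟩ := Submodule.mem_sup.mp hw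
      rw [map_add, h1 a ha, h2 b hb, add_zero]
  have key : ∀ A B : Submodule ℂ V, Module.finrank ℂ A = 3 →
      Module.finrank ℂ B = 3 → A ⊓ B = ⊥ →
      symplOrth α A ⊓ symplOrth α B = ⊥ := by
    intro A B hA hB hAB
    have hsup : A ⊔ B = ⊤ := by
      apply Submodule.eq_top_of_finrank_eq
      have h1 := Submodule.finrank_sup_add_finrank_inf_eq A B
      rw [hAB, finrank_bot, hA, hB] at h1
      omega
    rw [← horth_sup, hsup, horth_top]
  refine ⟨hUo3, hnotiso, rfl, hK1, ?_⟩
  intro L hL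
  obtain ⟨hLiso, hL3⟩ := hL
  have hLL : L = symplOrth α L :=
    Submodule.eq_of_le_of_finrank_le (fun x hx w hw => hLiso x hx w hw)
      (by simp [hdim, hL3])
  have hiff : L ⊓ U = ⊥ ↔ L ⊓ symplOrth α U = ⊥ := by
    constructor
    · intro h
      have h2 := key L U hL3 hU h
      rwa [← hLL] at h2
    · intro h
      have h2 := key L (symplOrth α U) hL3 hUo3 h
      rwa [← hLL, hdo] at h2
  exact not_congr hiff
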